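/- Let A and B be NFAs on the same finite state set Q with finite alphabets Σ_A and Σ_B, such that B ≤ A, i.e., for every symbol x ∈ Σ_B there is a symbol y ∈ Σ_A with δ_B(q,x) ⊆ δ_A(q,y) for all q ∈ Q. Then there exists a partition P of Σ_B with |P| ≤ |Σ_A| such that the partitional symbolic merge C of B along P (the NFA on Q with alphabet P and δ_C(q,p) = ⋃_{x∈p} δ_B(q,x)) satisfies B ≤ C ≤ A. Furthermore, if B is D3-directing and d₃(B) ≤ d₃(A) (with A D3-directing), then d₃(C) = d₃(B) = d₃(A). -/
import Mathlib


/-- Action of an NFA transition function on a subset of states along a word. -/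
def nfaRun {n m : ℕ} (δ : Fin n → Fin m → Finset (Fin n)) :
    Finset (Fin n) → List (Fin m) → Finset (Fin n)
  | S, [] => S
  | S, a :: w => nfaRun δ (S.biUnion fun q => δ q a) w

/-- The word `w` is D3-directing for the NFA `δ`:
the intersection `⋂_{q ∈ Q} q·w` is nonempty. -/
def nfaD3word {n m : ℕ} (δ : Fin n → Fin m → Finset (Fin n)) (w : List (Fin m)) : Prop :=
  ∃ r : Fin n, ∀ q : Fin n, r ∈ nfaRun δ {q} w

/-- `B ≤ A` for NFAs on the same state set: every symbol of `B` lies below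
some symbol of `A`. -/
def nfaLe {n m₁ m₂ : ℕ} (δ₁ : Fin n → Fin m₁ → Finset (Fin n))
    (δ₂ : Fin n → Fin m₂ → Finset (Fin n)) : Prop :=
  ∀ x, ∃ y, ∀ q, δ₁ q x ⊆ δ₂ q y

/-- The partitional symbolic merge of the NFA `δB` along the partition of its
alphabet given by the fibers of `f`: the symbols in each fiber are merged. -/
def nfaMerge {n mB k : ℕ} (δB : Fin n → Fin mB → Finset (Fin n))
    (f : Fin mB → Fin k) : Fin n → Fin k → Finset (Fin n) :=
  fun q p => (Finset.univ.filter fun x => f x = p).biUnion fun x => δB q x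

/-- The set of lengths of D3-directing words of an NFA; its infimum is d₃. -/
def d3Set {n m : ℕ} (δ : Fin n → Fin m → Finset (Fin n)) : Set ℕ :=
  {l | ∃ w, w.length = l ∧ nfaD3word δ w}

lemma run_mono {n m₁ m₂ : ℕ} (δ₁ : Fin n → Fin m₁ → Finset (Fin n))
    (δ₂ : Fin n → Fin m₂ → Finset (Fin n)) (h : Fin m₁ → Fin m₂)
    (hh : ∀ x q, δ₁ q x ⊆ δ₂ q (h x)) :
    ∀ (w : List (Fin m₁)) (S T : Finset (Fin n)), S ⊆ T →
      nfaRun δ₁ S w ⊆ nfaRun δ₂ T (w.map h) := by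
  intro w
  induction w with
  | nil => intro S T hST; simpa [nfaRun] using hST
  | cons a w ih =>
    intro S T hST
    simp only [List.map_cons, nfaRun]
    apply ih
    intro r hr
    rcases Finset.mem_biUnion.1 hr with ⟨q, hq, hrq⟩
    exact Finset.mem_biUnion.2 ⟨q, hST hq, hh a q hrq⟩

lemma d3_subset {n m₁ m₂ : ℕ} (δ₁ : Fin n → Fin m₁ → Finset (Fin n))
    (δ₂ : Fin n → Fin m₂ → Finset (Fin n)) (hle : nfaLe δ₁ δ₂) :
    d3Set δ₁ ⊆ d3Set δ₂ := by
  choose h hh using hle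
  rintro l ⟨w, hw, r, hr⟩
  refine ⟨w.map h, by simp [hw], r, fun q => ?_⟩
  exact run_mono δ₁ δ₂ h (fun x q => hh x q) w {q} {q} (by simp) (hr q)

lemma d3word_le {n m₁ m₂ : ℕ} (δ₁ : Fin n → Fin m₁ → Finset (Fin n))
    (δ₂ : Fin n → Fin m₂ → Finset (Fin n)) (hle : nfaLe δ₁ δ₂)
    (hex : ∃ w, nfaD3word δ₁ w) :
    (∃ w, nfaD3word δ₂ w) ∧ sInf (d3Set δ₂) ≤ sInf (d3Set δ₁) := by
  obtain ⟨w, hw⟩ := hex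
  have h1 : w.length ∈ d3Set δ₁ := ⟨w, rfl, hw⟩
  have hsub := d3_subset δ₁ δ₂ hle
  have h2 : sInf (d3Set δ₁) ∈ d3Set δ₁ := Nat.sInf_mem ⟨_, h1⟩
  obtain ⟨w', hw', hd⟩ := hsub h2
  exact ⟨⟨w', hd⟩, Nat.sInf_le (hsub h2)⟩

theorem stmt18 (n mB mA : ℕ) (δB : Fin n → Fin mB → Finset (Fin n))
    (δA : Fin n → Fin mA → Finset (Fin n)) (hBA : nfaLe δB δA) :
    ∃ (k : ℕ) (f : Fin mB → Fin k),
      -- f is a partition of Σ_B into k nonempty classes, with k ≤ |Σ_A|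
      k ≤ mA ∧ Function.Surjective f ∧
      -- B ≤ C ≤ A for the partitional symbolic merge C of B along f
      nfaLe δB (nfaMerge δB f) ∧ nfaLe (nfaMerge δB f) δA ∧
      -- furthermore d₃(C) = d₃(B) = d₃(A) whenever d₃(B) ≤ d₃(A)
      ((∃ w, nfaD3word δB w) → (∃ w, nfaD3word δA w) →
        sInf (d3Set δB) ≤ sInf (d3Set δA) →
        sInf (d3Set (nfaMerge δB f)) = sInf (d3Set δB) ∧
          sInf (d3Set δB) = sInf (d3Set δA)) := by
  choose g hg using hBA
  set s : Finset (Fin mA) := Finset.univ.image g with hs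
  have hmem : ∀ x, g x ∈ s := fun x => Finset.mem_image.2 ⟨x, Finset.mem_univ x, rfl⟩
  set k := s.card with hk
  have hkA : k ≤ mA := by
    calc s.card ≤ (Finset.univ : Finset (Fin mA)).card := Finset.card_le_card (by simp)
    _ = mA := by simp
  let e : s ≃ Fin k := s.equivFin
  let f : Fin mB → Fin k := fun x => e ⟨g x, hmem x⟩
  have hsurj : Function.Surjective f := by
    intro p
    obtain ⟨⟨a, ha⟩, hea⟩ : ∃ z, e z = p := ⟨e.symm p, by simp⟩
    obtain ⟨x, -, hx⟩ := Finset.mem_image.1 ha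
    exact ⟨x, by simp only [f]; rw [show (⟨g x, hmem x⟩ : s) = ⟨a, ha⟩ from Subtype.ext hx, hea]⟩
  have hfg : ∀ x y, f x = f y → g x = g y := by
    intro x y hxy
    have := e.injective hxy
    exact congrArg Subtype.val this
  have hBC : nfaLe δB (nfaMerge δB f) := by
    intro x
    refine ⟨f x, fun q => ?_⟩
    intro r hr
    exact Finset.mem_biUnion.2 ⟨x, by simp, hr⟩
  have hCA : nfaLe (nfaMerge δB f) δA := by
    intro p
    obtain ⟨x₀, hx₀⟩ := hsurj p
    refine ⟨g x₀, fun q => ?_⟩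
    apply Finset.biUnion_subset.2
    intro x hx
    have hfx : f x = p := (Finset.mem_filter.1 hx).2
    have : g x = g x₀ := hfg x x₀ (by rw [hfx, hx₀])
    rw [← this]
    exact hg x q
  refine ⟨k, f, hkA, hsurj, hBC, hCA, ?_⟩
  intro hB hA hle
  obtain ⟨hC, hCB⟩ := d3word_le δB (nfaMerge δB f) hBC hB
  obtain ⟨-, hAC⟩ := d3word_le (nfaMerge δB f) δA hCA hC
  constructor
  · omega
  · omega
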